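/- Let G be a Polish group acting continuously on a Polish space X, and let μ be a Borel probability measure on X invariant under the action. If for every g ≠ 1 the set A_g = {x ∈ X : g·x ≠ x} has positive μ-measure, then for every g ≠ 1 there exist an open neighborhood N of g with 1 ∉ N and an open set V ⊆ X with μ(V) > 0 such that N·V ∩ V = ∅. -/

import Mathlib

open MeasureTheory

/-- In a second countable space, any set of positive measure contains a point all of whose
open neighborhoods have positive measure. -/
lemma exists_forall_isOpen_measure_pos {X : Type*} [TopologicalSpace X]
    [SecondCountableTopology X] [MeasurableSpace X] [BorelSpace X]
    (μ : Measure X) {S : Set X} (hS : 0 < μ S) :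
    ∃ x ∈ S, ∀ V : Set X, IsOpen V → x ∈ V → 0 < μ V := by
  set 𝒰 : Set (Set X) := {U | IsOpen U ∧ μ U = 0} with h𝒰
  obtain ⟨T, hTcount, hTsub, hTeq⟩ :=
    TopologicalSpace.isOpen_sUnion_countable 𝒰 (fun U hU => hU.1)
  have hTnull : μ (⋃₀ 𝒰) = 0 := by
    rw [← hTeq]
    exact (measure_sUnion_null_iff hTcount).2 fun U hU => (hTsub hU).2
  have hpos : 0 < μ (S \ ⋃₀ 𝒰) := by
    rwa [measure_diff_null hTnull]
  obtain ⟨x, hxS, hxT⟩ := nonempty_of_measure_ne_zero hpos.ne'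
  refine ⟨x, hxS, fun V hV hxV => ?_⟩
  rcases eq_or_lt_of_le (zero_le : (0 : ENNReal) ≤ μ V) with h | h
  · exact absurd ⟨V, ⟨hV, h.symm⟩, hxV⟩ hxT
  · exact h

/-- If a Polish group `G` acts continuously on a Polish space `X` with a
`G`-invariant Borel probability measure `μ` such that `μ {x | g • x ≠ x} > 0` for all
`g ≠ 1`, then for every `g ≠ 1` there are an open neighborhood `N` of `g` with `1 ∉ N`
and an open set `V ⊆ X` with `μ V > 0` such that `N • V ∩ V = ∅`. -/
theorem stmt0 {G X : Type*} [Group G] [TopologicalSpace G] [IsTopologicalGroup G]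
    [PolishSpace G] [TopologicalSpace X] [PolishSpace X] [MulAction G X]
    [ContinuousSMul G X] [MeasurableSpace X] [BorelSpace X]
    (μ : Measure X) [IsProbabilityMeasure μ]
    (hinv : ∀ g : G, MeasurePreserving (fun x => g • x) μ μ)
    (hpos : ∀ g : G, g ≠ 1 → 0 < μ {x | g • x ≠ x}) :
    ∀ g : G, g ≠ 1 →
      ∃ N : Set G, IsOpen N ∧ g ∈ N ∧ (1 : G) ∉ N ∧
        ∃ V : Set X, IsOpen V ∧ 0 < μ V ∧
          ∀ h ∈ N, ∀ x ∈ V, h • x ∉ V := by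
  intro g hg
  obtain ⟨x, hxS, hx⟩ := exists_forall_isOpen_measure_pos μ (hpos g hg)
  have hne : g • x ≠ x := hxS
  -- Separate `g • x` and `x` by disjoint open sets
  obtain ⟨U, W, hU, hW, hgxU, hxW, hUW⟩ := t2_separation hne
  -- Continuity of the action at (g, x)
  have hcont : ContinuousAt (fun p : G × X => p.1 • p.2) (g, x) :=
    continuous_smul.continuousAt
  have hUnhds : U ∈ nhds ((g, x).1 • (g, x).2) := hU.mem_nhds hgxU
  obtain ⟨N₀, V₀, hN₀, hgN₀, hV₀, hxV₀, hprod⟩ :=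
    mem_nhds_prod_iff'.1 (hcont hUnhds)
  refine ⟨N₀, hN₀, hgN₀, ?_, V₀ ∩ W, hV₀.inter hW,
    hx _ (hV₀.inter hW) ⟨hxV₀, hxW⟩, ?_⟩
  · intro h1N
    have : (1 : G) • x ∈ U := hprod (Set.mk_mem_prod h1N hxV₀)
    rw [one_smul] at this
    exact hUW.le_bot ⟨this, hxW⟩
  · intro h hh y hy hcontra
    have hyU : h • y ∈ U := hprod (Set.mk_mem_prod hh hy.1)
    exact hUW.le_bot ⟨hyU, hcontra.2⟩
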